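/- Let R be a commutative ring with unity having no non-trivial idempotent and such that the clean graph Cl(R) is not a complete graph. Then the independence number of the strong resolving graph of Cl(R) equals 2. -/

import Mathlib

variable {V : Type*}

/-- In a graph `G`, `u` is maximally distant from `v` if `d(v,w) ≤ d(u,v)` for every
neighbour `w` of `u`. -/
def IsMaxDistFrom (G : SimpleGraph V) (u v : V) : Prop :=
  ∀ w ∈ G.neighborSet u, G.dist v w ≤ G.dist u v

/-- `u` and `v` are mutually maximally distant in `G`. -/
def IsMMD (G : SimpleGraph V) (u v : V) : Prop :=
  IsMaxDistFrom G u v ∧ IsMaxDistFrom G v u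

/-- The boundary of a graph: the set of vertices that are mutually maximally distant
from some other vertex.  This is the vertex set of the strong resolving graph. -/
def graphBoundary (G : SimpleGraph V) : Set V :=
  {u | ∃ v, u ≠ v ∧ IsMMD G u v}

/-- The strong resolving graph, realised on the full vertex set (vertices outside the
boundary are isolated): two distinct vertices are adjacent iff they are mutually
maximally distant. -/
def srGraph (G : SimpleGraph V) : SimpleGraph V where
  Adj u v := u ≠ v ∧ IsMMD G u v
  symm := ⟨fun u v h => ⟨h.1.symm, h.2.2, h.2.1⟩⟩
  loopless := ⟨fun u h => h.1 rfl⟩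

/-- The independence number of a graph: the largest cardinality of a finite set of
pairwise non-adjacent vertices. -/
noncomputable def indNum (G : SimpleGraph V) : ℕ :=
  sSup {n | ∃ s : Finset V, ((s : Set V).Pairwise fun a b => ¬ G.Adj a b) ∧ s.card = n}

/-- `S` is a strong resolving set of `G`: every pair of distinct vertices `u, v` is
strongly resolved by some `w ∈ S`, i.e. `v` lies on a shortest `u`-`w` path or `u` lies
on a shortest `v`-`w` path. -/
def IsStrongResolvingSet (G : SimpleGraph V) (S : Set V) : Prop :=
  ∀ u v : V, u ≠ v → ∃ w ∈ S,
    G.dist u w = G.dist u v + G.dist v w ∨ G.dist v w = G.dist v u + G.dist u w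

/-- The strong metric dimension of a graph: the smallest cardinality of a (finite)
strong resolving set. -/
noncomputable def sdim (G : SimpleGraph V) : ℕ :=
  sInf {n | ∃ S : Finset V, IsStrongResolvingSet G (S : Set V) ∧ S.card = n}

/-- Vertices of the clean graph: pairs `(e, u)` with `e` an idempotent and `u` a unit. -/
abbrev CleanVtx (R : Type*) [CommRing R] : Type _ := {e : R // IsIdempotentElem e} × Rˣ

/-- The clean graph `Cl(R)` of a commutative ring `R`: distinct vertices `(e,u)`, `(f,v)`
are adjacent iff `e * f = 0` or `u * v = 1`. -/
def cleanGraph (R : Type*) [CommRing R] : SimpleGraph (CleanVtx R) where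
  Adj x y := x ≠ y ∧ ((x.1 : R) * (y.1 : R) = 0 ∨ (x.2 : R) * (y.2 : R) = 1)
  symm := ⟨by
    rintro x y ⟨hxy, h | h⟩
    · exact ⟨hxy.symm, Or.inl (by rwa [mul_comm])⟩
    · exact ⟨hxy.symm, Or.inr (by rwa [mul_comm])⟩⟩
  loopless := ⟨fun x h => h.1 rfl⟩

/-- The vertex set of `Cl₂(R)`: clean vertices `(e,u)` with `e ≠ 0`. -/
def clean2Set (R : Type*) [CommRing R] : Set (CleanVtx R) := {x | (x.1 : R) ≠ 0}

/-- `Cl₂(R)`, the subgraph of `Cl(R)` induced on the vertices `(e,u)` with `e ≠ 0`. -/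
def clean2Graph (R : Type*) [CommRing R] : SimpleGraph (clean2Set R) :=
  SimpleGraph.induce (clean2Set R) (cleanGraph R)

/-- `U''(R)`: the set of units `u` with `u² ≠ 1`. -/
def uSecond (R : Type*) [CommRing R] : Set Rˣ := {u | (u : R) * (u : R) ≠ 1}

/-- `|Id(R)*|`: the number of non-trivial idempotents of `R`. -/
noncomputable def idStarNum (R : Type*) [CommRing R] : ℕ :=
  {e : R | IsIdempotentElem e ∧ e ≠ 0 ∧ e ≠ 1}.ncard

/-- `|Id⊥(R)*|`: the maximum cardinality of a set of nonzero pairwise orthogonal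
idempotents of `R`. -/
noncomputable def orthIdemNum (R : Type*) [CommRing R] : ℕ :=
  sSup {n | ∃ s : Finset R, (∀ e ∈ s, IsIdempotentElem e ∧ e ≠ 0) ∧
    ((s : Set R).Pairwise fun e f => e * f = 0) ∧ s.card = n}

section CleanHelpers

variable {R : Type*} [CommRing R] [Nontrivial R]

lemma cleanGraph_adj {x y : CleanVtx R} : (cleanGraph R).Adj x y ↔
    x ≠ y ∧ ((x.1 : R) * (y.1 : R) = 0 ∨ (x.2 : R) * (y.2 : R) = 1) := Iff.rfl

lemma srGraph_adj {G : SimpleGraph V} {u v : V} :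
    (srGraph G).Adj u v ↔ u ≠ v ∧ IsMMD G u v := Iff.rfl

/-- The idempotent `0` as a vertex component. -/
def zIdem (R : Type*) [CommRing R] : {e : R // IsIdempotentElem e} :=
  ⟨0, by simp [IsIdempotentElem]⟩

/-- The idempotent `1` as a vertex component. -/
def oIdem (R : Type*) [CommRing R] : {e : R // IsIdempotentElem e} :=
  ⟨1, by simp [IsIdempotentElem]⟩

lemma adj_of_fst_zero {x y : CleanVtx R} (hx : (x.1 : R) = 0) (h : x ≠ y) :
    (cleanGraph R).Adj x y :=
  cleanGraph_adj.mpr ⟨h, Or.inl (by rw [hx, zero_mul])⟩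

lemma clean_reachable (x y : CleanVtx R) : (cleanGraph R).Reachable x y := by
  have key : ∀ a : CleanVtx R, (cleanGraph R).Reachable (⟨zIdem R, 1⟩ : CleanVtx R) a := by
    intro a
    by_cases h : (⟨zIdem R, 1⟩ : CleanVtx R) = a
    · exact h ▸ SimpleGraph.Reachable.refl _
    · exact (adj_of_fst_zero rfl h).reachable
  exact (key x).symm.trans (key y)

lemma clean_dist_le_two (x y : CleanVtx R) : (cleanGraph R).dist x y ≤ 2 := by
  by_cases hxy : x = y
  · simp [hxy, SimpleGraph.dist_self]
  by_cases hadj : (cleanGraph R).Adj x y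
  · have := (SimpleGraph.dist_eq_one_iff_adj (G := cleanGraph R)).mpr hadj
    omega
  · have hx0 : x ≠ (⟨zIdem R, 1⟩ : CleanVtx R) := by
      rintro rfl; exact hadj (adj_of_fst_zero rfl hxy)
    have hy0 : y ≠ (⟨zIdem R, 1⟩ : CleanVtx R) := by
      rintro rfl; exact hadj ((adj_of_fst_zero rfl (Ne.symm hxy)).symm)
    have h1 : (cleanGraph R).Adj x (⟨zIdem R, 1⟩ : CleanVtx R) :=
      (adj_of_fst_zero rfl (Ne.symm hx0)).symm
    have h2 : (cleanGraph R).Adj (⟨zIdem R, 1⟩ : CleanVtx R) y :=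
      adj_of_fst_zero rfl (Ne.symm hy0)
    have := SimpleGraph.dist_le (SimpleGraph.Walk.cons h1 (SimpleGraph.Walk.cons h2 SimpleGraph.Walk.nil))
    simpa using this

lemma clean_two_le_dist {x y : CleanVtx R} (hxy : x ≠ y)
    (hadj : ¬ (cleanGraph R).Adj x y) : 2 ≤ (cleanGraph R).dist x y := by
  have h0 : (cleanGraph R).dist x y ≠ 0 :=
    SimpleGraph.dist_ne_zero_iff_ne_and_reachable.mpr ⟨hxy, clean_reachable x y⟩
  have h1 : (cleanGraph R).dist x y ≠ 1 := fun h =>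
    hadj ((SimpleGraph.dist_eq_one_iff_adj (G := cleanGraph R)).mp h)
  omega

lemma mmd_zero {x y : CleanVtx R} (hx : (x.1 : R) = 0) (hy : (y.1 : R) = 0)
    (hxy : x ≠ y) : IsMMD (cleanGraph R) x y := by
  have hdistle : ∀ a b : CleanVtx R, (a.1 : R) = 0 → a ≠ b →
      (cleanGraph R).dist a b = 1 := fun a b ha hab =>
    (SimpleGraph.dist_eq_one_iff_adj (G := cleanGraph R)).mpr (adj_of_fst_zero ha hab)
  constructor
  · intro w hw
    rw [hdistle x y hx hxy]
    by_cases hwy : y = w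
    · simp [hwy, SimpleGraph.dist_self]
    · rw [hdistle y w hy hwy]
  · intro w hw
    rw [hdistle y x hy hxy.symm]
    by_cases hwx : x = w
    · simp [hwx, SimpleGraph.dist_self]
    · rw [hdistle x w hx hwx]

lemma units_eq_of_mul {a b c : Rˣ} (h1 : (a : R) * (b : R) = 1)
    (h2 : (a : R) * (c : R) = 1) : b = c := by
  ext
  linear_combination (c : R) * h1 - (b : R) * h2

lemma mmd_one (hid : ∀ e : R, IsIdempotentElem e → e = 0 ∨ e = 1)
    {x y : CleanVtx R} (hx : (x.1 : R) = 1) (hy : (y.1 : R) = 1)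
    (hxy : x ≠ y) : IsMMD (cleanGraph R) x y := by
  by_cases hadj : (cleanGraph R).Adj x y
  · -- adjacent case: x.2 * y.2 = 1
    have hu : (x.2 : R) * (y.2 : R) = 1 := by
      rcases (cleanGraph_adj.mp hadj).2 with h | h
      · rw [hx, hy, mul_one] at h; exact absurd h one_ne_zero
      · exact h
    have hdist : (cleanGraph R).dist x y = 1 :=
      (SimpleGraph.dist_eq_one_iff_adj (G := cleanGraph R)).mpr hadj
    have main : ∀ a b : CleanVtx R, (a.1 : R) = 1 → (b.1 : R) = 1 →
        (a.2 : R) * (b.2 : R) = 1 → ∀ w ∈ (cleanGraph R).neighborSet a,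
        (cleanGraph R).dist b w ≤ 1 := by
      intro a b ha hb hab w hw
      have hadj' : (cleanGraph R).Adj a w := hw
      rcases hid (w.1 : R) w.1.2 with hw0 | hw1
      · have hbw : b ≠ w := by
          intro h; rw [h, hw0] at hb; exact one_ne_zero hb.symm
        have : (cleanGraph R).Adj b w := cleanGraph_adj.mpr ⟨hbw, Or.inl (by rw [hw0, mul_zero])⟩
        rw [(SimpleGraph.dist_eq_one_iff_adj (G := cleanGraph R)).mpr this]
      · have huw : (a.2 : R) * (w.2 : R) = 1 := by
          rcases (cleanGraph_adj.mp hadj').2 with h | h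
          · rw [ha, hw1, mul_one] at h; exact absurd h one_ne_zero
          · exact h
        have : w = b := by
          have h2 : w.2 = b.2 := units_eq_of_mul huw hab
          have h1 : w.1 = b.1 := Subtype.ext (by rw [hw1, hb])
          exact Prod.ext h1 h2
        rw [this]
        simp [SimpleGraph.dist_self]
    have hdist' : (cleanGraph R).dist y x = 1 := by
      rw [SimpleGraph.dist_comm]; exact hdist
    constructor
    · intro w hw
      rw [hdist]
      exact main x y hx hy hu w hw
    · intro w hw
      rw [hdist']
      exact main y x hy hx (by rw [mul_comm]; exact hu) w hw
  · -- non-adjacent case: distance 2, everything within distance 2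
    have hdist : (cleanGraph R).dist x y = 2 :=
      le_antisymm (clean_dist_le_two x y) (clean_two_le_dist hxy hadj)
    have hdist' : (cleanGraph R).dist y x = 2 := by
      rw [SimpleGraph.dist_comm]; exact hdist
    constructor
    · intro w hw
      rw [hdist]
      exact clean_dist_le_two y w
    · intro w hw
      rw [hdist']
      exact clean_dist_le_two x w

lemma exists_unit_ne_one (hid : ∀ e : R, IsIdempotentElem e → e = 0 ∨ e = 1)
    (hnc : cleanGraph R ≠ ⊤) : ∃ u : Rˣ, u ≠ 1 := by
  by_contra h
  push_neg at h
  apply hnc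
  ext x y
  simp only [SimpleGraph.top_adj]
  constructor
  · exact fun hadj => (cleanGraph_adj.mp hadj).1
  · intro hxy
    refine cleanGraph_adj.mpr ⟨hxy, Or.inl ?_⟩
    have hx2 : x.2 = 1 := h x.2
    have hy2 : y.2 = 1 := h y.2
    have h1 : x.1 ≠ y.1 := by
      intro heq
      exact hxy (Prod.ext heq (hx2.trans hy2.symm))
    rcases hid (x.1 : R) x.1.2 with h0 | h0
    · rw [h0, zero_mul]
    · rcases hid (y.1 : R) y.1.2 with h0' | h0'
      · rw [h0', mul_zero]
      · exact absurd (Subtype.ext (h0.trans h0'.symm)) h1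

lemma not_maxdist (hid : ∀ e : R, IsIdempotentElem e → e = 0 ∨ e = 1)
    {u₀ : Rˣ} (hu : u₀ ≠ 1) :
    ¬ IsMaxDistFrom (cleanGraph R) (⟨zIdem R, 1⟩ : CleanVtx R)
      (⟨oIdem R, 1⟩ : CleanVtx R) := by
  intro h
  have hzo : (⟨zIdem R, 1⟩ : CleanVtx R) ≠ (⟨oIdem R, 1⟩ : CleanVtx R) := by
    intro heq
    have := congrArg (fun p => (p.1 : R)) heq
    exact zero_ne_one this
  set w : CleanVtx R := ⟨oIdem R, u₀⟩ with hwdef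
  have hzw : (⟨zIdem R, 1⟩ : CleanVtx R) ≠ w := by
    intro heq
    have := congrArg (fun p => (p.1 : R)) heq
    exact zero_ne_one this
  have hw : w ∈ (cleanGraph R).neighborSet (⟨zIdem R, 1⟩ : CleanVtx R) :=
    adj_of_fst_zero rfl hzw
  have hle := h w hw
  have hdzo : (cleanGraph R).dist (⟨zIdem R, 1⟩ : CleanVtx R)
      (⟨oIdem R, 1⟩ : CleanVtx R) = 1 :=
    (SimpleGraph.dist_eq_one_iff_adj (G := cleanGraph R)).mpr (adj_of_fst_zero rfl hzo)
  have how : (⟨oIdem R, 1⟩ : CleanVtx R) ≠ w := by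
    intro heq
    exact hu ((congrArg Prod.snd heq).symm)
  have hnadj : ¬ (cleanGraph R).Adj (⟨oIdem R, 1⟩ : CleanVtx R) w := by
    rintro hh; rcases cleanGraph_adj.mp hh with ⟨-, h | h⟩
    · rw [hwdef] at h
      simp [oIdem] at h
    · apply hu
      ext
      rw [hwdef] at h
      simpa using h
  have h2 := clean_two_le_dist how hnadj
  omega

lemma indep_card_le_two (hid : ∀ e : R, IsIdempotentElem e → e = 0 ∨ e = 1)
    (s : Finset (CleanVtx R))
    (hs : (s : Set (CleanVtx R)).Pairwise fun a b => ¬ (srGraph (cleanGraph R)).Adj a b) :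
    s.card ≤ 2 := by
  classical
  have : s.card ≤ ({0, 1} : Finset R).card := by
    apply Finset.card_le_card_of_injOn (fun x => (x.1 : R))
    · intro a ha
      simp only [Finset.coe_insert, Finset.coe_singleton, Set.mem_insert_iff, Set.mem_singleton_iff]
      exact hid (a.1 : R) a.1.2
    · intro a ha b hb hfab
      by_contra hne
      have hfab' : (a.1 : R) = (b.1 : R) := hfab
      apply hs ha hb hne
      refine srGraph_adj.mpr ⟨hne, ?_⟩
      rcases hid (a.1 : R) a.1.2 with h0 | h0
      · exact mmd_zero h0 (hfab' ▸ h0) hne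
      · exact mmd_one hid h0 (hfab' ▸ h0) hne
  calc s.card ≤ ({0, 1} : Finset R).card := this
    _ ≤ 2 := Finset.card_insert_le _ _ |>.trans (by simp)

end CleanHelpers

theorem statement_11 (R : Type*) [CommRing R] [Nontrivial R]
    (hid : ∀ e : R, IsIdempotentElem e → e = 0 ∨ e = 1)
    (hnc : cleanGraph R ≠ ⊤) :
    indNum (srGraph (cleanGraph R)) = 2 := by
  classical
  obtain ⟨u₀, hu₀⟩ := exists_unit_ne_one hid hnc
  set z1 : CleanVtx R := ⟨zIdem R, 1⟩ with hz1
  set o1 : CleanVtx R := ⟨oIdem R, 1⟩ with ho1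
  have hzo : z1 ≠ o1 := by
    intro heq
    have := congrArg (fun p => (p.1 : R)) heq
    exact zero_ne_one this
  have hnmmd : ¬ IsMaxDistFrom (cleanGraph R) z1 o1 := not_maxdist hid hu₀
  have hpair : (({z1, o1} : Finset (CleanVtx R)) : Set (CleanVtx R)).Pairwise
      fun a b => ¬ (srGraph (cleanGraph R)).Adj a b := by
    intro a ha b hb hab
    simp only [Finset.coe_insert, Finset.coe_singleton, Set.mem_insert_iff,
      Set.mem_singleton_iff] at ha hb
    rintro hh; rcases srGraph_adj.mp hh with ⟨-, hmmd⟩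
    rcases ha with rfl | rfl <;> rcases hb with rfl | rfl
    · exact hab rfl
    · exact hnmmd hmmd.1
    · exact hnmmd hmmd.2
    · exact hab rfl
  have hmem : 2 ∈ {n | ∃ s : Finset (CleanVtx R),
      ((s : Set (CleanVtx R)).Pairwise fun a b => ¬ (srGraph (cleanGraph R)).Adj a b) ∧
      s.card = n} :=
    ⟨{z1, o1}, hpair, by rw [Finset.card_insert_of_notMem (by simpa using hzo)]; simp⟩
  have hbdd : ∀ n ∈ {n | ∃ s : Finset (CleanVtx R),
      ((s : Set (CleanVtx R)).Pairwise fun a b => ¬ (srGraph (cleanGraph R)).Adj a b) ∧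
      s.card = n}, n ≤ 2 := by
    rintro n ⟨s, hs, rfl⟩
    exact indep_card_le_two hid s hs
  exact le_antisymm (csSup_le ⟨2, hmem⟩ hbdd) (le_csSup ⟨2, hbdd⟩ hmem)
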